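/- arXiv:1504.02717 — 2 statements merged into one kernel-verified Lean document; each statement's English description precedes it below -/
import Mathlib

section
/- Let (S, N) be a quadratic normalisation with an N-neutral element e, let (S, R) be the associated rewriting system with rules s·t → N̄(s·t) for s·t ≠ N̄(s·t), and let R_e consist of the rules s·t → π_e(N̄(s·t)) for s, t ∈ S∖{e} with s·t ≠ N̄(s·t). If (S, R) is terminating, then (S∖{e}, R_e) is terminating. -/
namespace QN

variable {S A : Type*}

/-- A normalisation: a length-preserving map `N` on words over `S` fixing
length-one words and satisfying `N (u ++ N w ++ v) = N (u ++ w ++ v)`. -/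
structure Normalisation (S : Type*) where
  N : List S → List S
  length_eq : ∀ w : List S, (N w).length = w.length
  single : ∀ s : S, N [s] = [s]
  mid : ∀ u v w : List S, N (u ++ N w ++ v) = N (u ++ w ++ v)

/-- Extract the two entries of a length-two word (with a default fallback). -/
def pairOf : List S → S → S → S × S
  | [x, y], _, _ => (x, y)
  | _, s, t => (s, t)

/-- The restriction `N̄` of `N` to length-two words, as a map on pairs. -/
def nbar (N : List S → List S) (s t : S) : S × S :=
  pairOf (N [s, t]) s t

/-- Apply `f` to the length-two factor at (1-indexed) position `i`;
out-of-range positions act as the identity. -/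
def applyAt (f : S → S → S × S) : ℕ → List S → List S
  | 1, a :: b :: l => (f a b).1 :: (f a b).2 :: l
  | n + 2, a :: l => a :: applyAt f (n + 1) l
  | _, l => l

/-- `φ_u`: apply `φ` at the successive positions of `u`, leftmost entry of `u` first. -/
def applySeq (f : S → S → S × S) (u : List ℕ) (w : List S) : List S :=
  u.foldl (fun w i => applyAt f i w) w

/-- A word is `N`-normal iff all its length-two factors are `N`-normal. -/
def LocallyNormal (N : List S → List S) : Prop :=
  ∀ w : List S, N w = w ↔ ∀ u v : List S, ∀ s t : S, w = u ++ s :: t :: v → N [s, t] = [s, t]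

/-- Every word is normalised by finitely many applications of `N̄` at positions. -/
def NbarGenerated (N : List S → List S) : Prop :=
  ∀ w : List S, ∃ u : List ℕ, N w = applySeq (nbar N) u w

/-- A normalisation map is quadratic if it satisfies the two locality conditions. -/
def Quadratic (N : List S → List S) : Prop :=
  LocallyNormal N ∧ NbarGenerated N

/-- `e` is `N`-neutral: `N (w·e) = N (e·w) = N w · e`. -/
def Neutral (N : List S → List S) (e : S) : Prop :=
  ∀ w : List S, N (w ++ [e]) = N w ++ [e] ∧ N (e :: w) = N w ++ [e]

/-- The alternating sequence of length `m` starting with `k ∈ {1,2}`. -/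
def altFrom : ℕ → ℕ → List ℕ
  | _, 0 => []
  | k, n + 1 => k :: altFrom (3 - k) n

/-- `(S, N)` is of left-class `c`: `N = N̄_{α_c}` on length-three words. -/
def LeftClass (N : List S → List S) (c : ℕ) : Prop :=
  ∀ w : List S, w.length = 3 → N w = applySeq (nbar N) (altFrom 1 c) w

/-- `(S, N)` is of right-class `c`: `N = N̄_{ᾱ_c}` on length-three words. -/
def RightClass (N : List S → List S) (c : ℕ) : Prop :=
  ∀ w : List S, w.length = 3 → N w = applySeq (nbar N) (altFrom 2 c) w

/-- The domino rule is valid for `f`. -/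
def DominoRule (f : S → S → S × S) : Prop :=
  ∀ s₁ s₂ s₁' s₂' t₀ t₁ t₂ : S,
    f t₀ s₁ = (s₁', t₁) → f t₁ s₂ = (s₂', t₂) →
    f s₁ s₂ = (s₁, s₂) → f s₁' s₂' = (s₁', s₂')

/-- The sequences `δ_p`: `δ₁ = ε` and `δ_p = sh(δ_{p-1})·1·2·⋯·(p-1)`. -/
def delta : ℕ → List ℕ
  | 0 => []
  | 1 => []
  | p + 2 => (delta (p + 1)).map (· + 1) ++ List.range' 1 (p + 1)

/-- Apply `N` to the length-`k` factor beginning at (1-indexed) position `i`. -/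
def applyFactorAt (N : List S → List S) (k : ℕ) : ℕ → List S → List S
  | 0, w => w
  | i + 1, w => w.take i ++ N ((w.drop i).take k) ++ w.drop (i + k)

/-- Apply `N` to length-`k` factors at the successive positions of `u`. -/
def applyFactorSeq (N : List S → List S) (k : ℕ) (u : List ℕ) (w : List S) : List S :=
  u.foldl (fun w i => applyFactorAt N k i w) w

/-- One-step rewriting relation of a rewriting system `R`. -/
def RStep (R : List A → List A → Prop) (x y : List A) : Prop :=
  ∃ u v w w', R w w' ∧ x = u ++ w ++ v ∧ y = u ++ w' ++ v

/-- A rewriting system is terminating if it admits no infinite rewriting sequence. -/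
def Terminating (R : List A → List A → Prop) : Prop :=
  ¬ ∃ f : ℕ → List A, ∀ n, RStep R (f n) (f (n + 1))

/-- Confluence of a rewriting system. -/
def Confluent (R : List A → List A → Prop) : Prop :=
  ∀ w w₁ w₂ : List A, Relation.ReflTransGen (RStep R) w w₁ →
    Relation.ReflTransGen (RStep R) w w₂ →
    ∃ w', Relation.ReflTransGen (RStep R) w₁ w' ∧ Relation.ReflTransGen (RStep R) w₂ w'

/-- A word is `R`-normal if no rule of `R` applies to any of its factors. -/
def RNormal (R : List A → List A → Prop) (w : List A) : Prop :=
  ¬ ∃ w', RStep R w w'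

/-- Every word rewrites to some `R`-normal word. -/
def Normalising (R : List A → List A → Prop) : Prop :=
  ∀ w : List A, ∃ w', Relation.ReflTransGen (RStep R) w w' ∧ RNormal R w'

/-- A rewriting system is quadratic if all its rules relate length-two words. -/
def QuadraticRS (R : List A → List A → Prop) : Prop :=
  ∀ w w', R w w' → w.length = 2 ∧ w'.length = 2

/-- A rewriting system is reduced. -/
def ReducedRS (R : List A → List A → Prop) : Prop :=
  ∀ w w', R w w' → RNormal R w' ∧ RNormal (fun a b => R a b ∧ ¬(a = w ∧ b = w')) w

/-- The rewriting system associated with a quadratic normalisation: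
one rule `s·t → N̄(s·t)` for each non-`N`-normal length-two word. -/
def rules (N : List S → List S) : List S → List S → Prop :=
  fun w w' => ∃ s t : S, w = [s, t] ∧ w' = N [s, t] ∧ w' ≠ w

/-- `π_e`: delete all occurrences of `e`, landing in words over `S∖{e}`. -/
noncomputable def pie (e : S) (w : List S) : List {s : S // s ≠ e} :=
  w.filterMap fun s => @dite _ (s = e) (Classical.dec _) (fun _ => none) (fun h => some ⟨s, h⟩)

/-- The rewriting system `R_e` over `S∖{e}`. -/
def rulesE (N : List S → List S) (e : S) :
    List {s : S // s ≠ e} → List {s : S // s ≠ e} → Prop :=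
  fun w w' => ∃ s t : {s : S // s ≠ e},
    w = [s, t] ∧ N [s.1, t.1] ≠ [s.1, t.1] ∧ w' = pie e (N [s.1, t.1])

/-- `M` admits the monoid presentation `⟨S ∣ r⟩`. -/
def PresentedBy (M : Type*) [Monoid M] (S : Type*) (r : List S → List S → Prop) : Prop :=
  Nonempty ((conGen fun a b : FreeMonoid S => r a.toList b.toList).Quotient ≃* M)

/-- Left-divisibility in a monoid. -/
def LeftDvd {M : Type*} [Monoid M] (f g : M) : Prop :=
  ∃ g', f * g' = g

/-- The pair `s₁, s₂` is `S`-normal (greedy). -/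
def SNormalPair {M : Type*} [Monoid M] (S : Set M) (s₁ s₂ : M) : Prop :=
  ∀ s ∈ S, ∀ f : M, LeftDvd s (f * s₁ * s₂) → LeftDvd s (f * s₁)

/-- A word over `S` is `S`-normal if all its adjacent pairs are. -/
def SNormalWord {M : Type*} [Monoid M] (S : Set M) (w : List S) : Prop :=
  ∀ u v : List S, ∀ a b : S, w = u ++ a :: b :: v → SNormalPair S (a : M) (b : M)

end QN

open QN

section Aux

/-- No infinite `TransGen` chain when there is no infinite chain. -/
theorem no_trans_chain {α : Type*} {r : α → α → Prop}
    (h : ¬∃ f : ℕ → α, ∀ n, r (f n) (f (n + 1))) :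
    ¬∃ g : ℕ → α, ∀ n, Relation.TransGen r (g n) (g (n + 1)) := by
  rintro ⟨g, hg⟩
  set C : α → Prop := fun x => ∃ g : ℕ → α, g 0 = x ∧ ∀ n, Relation.TransGen r (g n) (g (n + 1))
    with hC
  have step : ∀ x, C x → ∃ y, r x y ∧ C y := by
    rintro x ⟨g, rfl, hg⟩
    obtain ⟨b, hb, hbc⟩ := Relation.TransGen.head'_iff.mp (hg 0)
    refine ⟨b, hb, fun n => Nat.casesOn n b (fun m => g (m + 2)), rfl, ?_⟩
    intro n
    cases n with
    | zero => exact Relation.TransGen.trans_right hbc (hg 1)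
    | succ m => exact hg (m + 2)
  let F : {x // C x} → {x // C x} := fun p => ⟨(step p.1 p.2).choose, (step p.1 p.2).choose_spec.2⟩
  have hF : ∀ p : {x // C x}, r p.1 (F p).1 := fun p => (step p.1 p.2).choose_spec.1
  refine h ⟨fun n => (F^[n] ⟨g 0, g, rfl, hg⟩).1, fun n => ?_⟩
  show r (F^[n] ⟨g 0, g, rfl, hg⟩).1 (F^[n + 1] ⟨g 0, g, rfl, hg⟩).1
  rw [Function.iterate_succ_apply']
  exact hF _

variable {S : Type*} (ns : Normalisation S) (e : S)

/-- Embedding of words over `S∖{e}` into words over `S`. -/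
def emb (w : List {s : S // s ≠ e}) : List S := w.map Subtype.val

theorem emb_append (u v : List {s : S // s ≠ e}) : emb e (u ++ v) = emb e u ++ emb e v :=
  List.map_append

theorem pie_cons_e (l : List S) : pie e (e :: l) = pie e l := by
  simp [pie, List.filterMap_cons]

theorem pie_cons_ne (x : S) (hx : x ≠ e) (l : List S) :
    pie e (x :: l) = ⟨x, hx⟩ :: pie e l := by
  simp [pie, List.filterMap_cons, hx]

theorem pie_nil : pie e ([] : List S) = [] := rfl

theorem N_idem (w : List S) : ns.N (ns.N w) = ns.N w := by
  have := ns.mid [] [] w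
  simpa using this

theorem N_et (he : Neutral ns.N e) (t : S) : ns.N [e, t] = [t, e] := by
  have := (he [t]).2
  rwa [ns.single] at this

/-- Structure of normal length-two words: the `e`'s trail. -/
theorem decomp (he : Neutral ns.N e) (s t : S) :
    ∃ j : ℕ, ns.N [s, t] = emb e (pie e (ns.N [s, t])) ++ List.replicate j e := by
  have hlen : (ns.N [s, t]).length = 2 := by rw [ns.length_eq]; rfl
  obtain ⟨a, b, hab⟩ : ∃ a b : S, ns.N [s, t] = [a, b] := by
    match h : ns.N [s, t], hlen with
    | [a, b], _ => exact ⟨a, b, rfl⟩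
  have hn : ns.N [a, b] = [a, b] := by rw [← hab, N_idem ns, hab]
  by_cases ha : a = e
  · -- then the word [e, b] is N-normal, forcing b = e
    rw [ha] at hn
    have h2 := N_et ns e he b
    rw [hn] at h2
    have hb : b = e := (((List.cons.injEq _ _ _ _).mp h2).1).symm
    refine ⟨2, ?_⟩
    rw [hab, ha, hb, pie_cons_e, pie_cons_e, pie_nil]
    rfl
  · by_cases hb : b = e
    · refine ⟨1, ?_⟩
      rw [hab, hb, pie_cons_ne e a ha, pie_cons_e, pie_nil]
      rfl
    · refine ⟨0, ?_⟩
      rw [hab, pie_cons_ne e a ha, pie_cons_ne e b hb, pie_nil]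
      rfl

/-- Moving a single `e` to the right past a word with no `e`. -/
theorem move_one (he : Neutral ns.N e) (v : List {s : S // s ≠ e}) :
    ∀ u x : List S,
      Relation.ReflTransGen (RStep (rules ns.N)) (u ++ e :: (emb e v ++ x))
        (u ++ emb e v ++ e :: x) := by
  induction v with
  | nil =>
    intro u x
    simp only [emb, List.map_nil, List.nil_append, List.append_nil]
    exact Relation.ReflTransGen.refl
  | cons a v ih =>
    intro u x
    have hstep : RStep (rules ns.N) (u ++ e :: (emb e (a :: v) ++ x))
        ((u ++ [a.1]) ++ e :: (emb e v ++ x)) := by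
      refine ⟨u, emb e v ++ x, [e, a.1], [a.1, e], ⟨e, a.1, rfl, (N_et ns e he a.1).symm, ?_⟩, ?_, ?_⟩
      · intro h
        exact a.2 ((List.cons.injEq _ _ _ _).mp h).1
      · simp [emb]
      · simp
    have h1 := ih (u ++ [a.1]) x
    refine Relation.ReflTransGen.head hstep ?_
    convert h1 using 1
    simp [emb]

/-- Moving a block of `e`'s to the right past a word with no `e`. -/
theorem move_many (he : Neutral ns.N e) (j : ℕ) (v : List {s : S // s ≠ e}) :
    ∀ u x : List S,
      Relation.ReflTransGen (RStep (rules ns.N)) (u ++ List.replicate j e ++ emb e v ++ x)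
        (u ++ emb e v ++ List.replicate j e ++ x) := by
  induction j with
  | zero => intro u x; simp; exact Relation.ReflTransGen.refl
  | succ j ih =>
    intro u x
    have h1 := ih (u ++ [e]) x
    have h2 := move_one ns e he v u (List.replicate j e ++ x)
    have e1 : u ++ List.replicate (j + 1) e ++ emb e v ++ x
        = (u ++ [e]) ++ List.replicate j e ++ emb e v ++ x := by
      simp [List.replicate_succ]
    have e2 : (u ++ [e]) ++ emb e v ++ List.replicate j e ++ x
        = u ++ e :: (emb e v ++ (List.replicate j e ++ x)) := by simp
    have e3 : u ++ emb e v ++ e :: (List.replicate j e ++ x)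
        = u ++ emb e v ++ List.replicate (j + 1) e ++ x := by
      simp [List.replicate_succ]
    rw [e1]
    refine h1.trans ?_
    rw [e2, ← e3]
    exact h2

/-- One `R_e`-step is simulated by at least one `R`-step. -/
theorem sim (he : Neutral ns.N e) {w w' : List {s : S // s ≠ e}}
    (h : RStep (rulesE ns.N e) w w') :
    ∃ j : ℕ, ∀ k : ℕ,
      Relation.TransGen (RStep (rules ns.N)) (emb e w ++ List.replicate k e)
        (emb e w' ++ List.replicate (j + k) e) := by
  obtain ⟨u, v, p, p', ⟨s, t, hp, hne, hp'⟩, hw, hw'⟩ := h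
  obtain ⟨j, hj⟩ := decomp ns e he s.1 t.1
  refine ⟨j, fun k => ?_⟩
  have hstep : RStep (rules ns.N) (emb e w ++ List.replicate k e)
      ((emb e u ++ emb e (pie e (ns.N [s.1, t.1]))) ++ List.replicate j e
        ++ emb e v ++ List.replicate k e) := by
    refine ⟨emb e u, emb e v ++ List.replicate k e, [s.1, t.1], ns.N [s.1, t.1],
      ⟨s.1, t.1, rfl, rfl, hne⟩, ?_, ?_⟩
    · rw [hw, hp]; simp [emb_append, emb]
    · conv_rhs => rw [hj]
      simp
  have hmove := move_many ns e he j v (emb e u ++ emb e (pie e (ns.N [s.1, t.1])))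
    (List.replicate k e)
  refine Relation.TransGen.head' hstep (hmove.trans ?_)
  have heq : emb e u ++ emb e (pie e (ns.N [s.1, t.1])) ++ emb e v ++ List.replicate j e
      ++ List.replicate k e = emb e w' ++ List.replicate (j + k) e := by
    rw [hw', hp', emb_append, emb_append, List.replicate_add]
    simp only [List.append_assoc]
  rw [heq]

end Aux

/-- If the rewriting system associated with a quadratic normalisation with
an `N`-neutral element `e` is terminating, then so is the induced system over `S∖{e}`. -/
theorem statement5 {S : Type*} (ns : Normalisation S) (hq : Quadratic ns.N)
    (e : S) (he : Neutral ns.N e)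
    (hterm : Terminating (rules ns.N)) :
    Terminating (rulesE ns.N e) := by
  rintro ⟨f, hf⟩
  have hchain := fun n => sim ns e he (hf n)
  choose j hj using hchain
  -- accumulated number of trailing e's
  let K : ℕ → ℕ := fun n => Nat.rec 0 (fun m k => j m + k) n
  refine no_trans_chain hterm ⟨fun n => emb e (f n) ++ List.replicate (K n) e, fun n => ?_⟩
  exact hj n (K n)
end

section
/- If (S, N) is a quadratic normalisation of class (4, 3), then (S, N) is of p-class (4, 3) for every p ≥ 3; that is, for every length-p word w, one has N(w) = N^[p−1]_{α_4}(w) and N(w) = N^[p−1]_{ᾱ_3}(w). -/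
namespace QN

variable {T : Type*}

/-- The predicate "the length-two word `s·t` is `N`-normal". -/
private def Pn (N : List T → List T) (s t : T) : Prop := N [s, t] = [s, t]

/-- Left-to-right pass of `nbar` carrying a letter through a word. -/
private def Dp (f : T → T → T × T) : T → List T → List T × T
  | a, [] => ([], a)
  | a, s :: u => ((f a s).1 :: (Dp f (f a s).2 u).1, (Dp f (f a s).2 u).2)

private lemma Dp_snoc (f : T → T → T × T) : ∀ (u : List T) (a s : T),
    Dp f a (u ++ [s]) = ((Dp f a u).1 ++ [(f (Dp f a u).2 s).1], (f (Dp f a u).2 s).2)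
  | [], a, s => by simp [Dp]
  | x :: u, a, s => by simp [Dp, Dp_snoc f u]

private lemma Dp_len (f : T → T → T × T) : ∀ (u : List T) (a : T),
    (Dp f a u).1.length = u.length
  | [], _ => rfl
  | x :: u, a => by simp [Dp, Dp_len f u]

private lemma nbar_spec (ns : Normalisation T) (s t : T) :
    ns.N [s, t] = [(nbar ns.N s t).1, (nbar ns.N s t).2] := by
  have hl : (ns.N [s, t]).length = 2 := ns.length_eq [s, t]
  rcases hnn : ns.N [s, t] with _ | ⟨a, l⟩
  · rw [hnn] at hl; simp at hl
  · rcases l with _ | ⟨b, l⟩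
    · rw [hnn] at hl; simp at hl
    · rcases l with _ | ⟨c, l⟩
      · simp [nbar, pairOf, hnn]
      · rw [hnn] at hl; simp at hl

private lemma n_idem (ns : Normalisation T) (w : List T) : ns.N (ns.N w) = ns.N w := by
  have := ns.mid [] [] w; simpa using this

private lemma n_fix (ns : Normalisation T) (hloc : LocallyNormal ns.N) (w : List T)
    (hch : List.Chain' (Pn ns.N) w) : ns.N w = w := by
  rw [hloc w]
  intro u v s t hw
  have h2 : List.Chain' (Pn ns.N) [s, t] := hch.infix ⟨u, v, by rw [hw]; simp⟩
  show Pn ns.N s t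
  exact List.isChain_pair.1 h2

private lemma toChain (ns : Normalisation T) :
    ∀ w : List T, (∀ u v : List T, ∀ s t : T, w = u ++ s :: t :: v → ns.N [s, t] = [s, t]) →
      List.Chain' (Pn ns.N) w := by
  intro w
  induction w with
  | nil => intro _; exact List.isChain_nil
  | cons a l ih =>
    intro h
    cases l with
    | nil => exact List.isChain_singleton _
    | cons b l' =>
      refine List.isChain_cons_cons.2 ⟨h [] l' a b rfl, ih ?_⟩
      intro u v s t hw
      exact h (a :: u) v s t (by rw [hw]; rfl)

private lemma chain_N (ns : Normalisation T) (hloc : LocallyNormal ns.N) (w : List T) :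
    List.Chain' (Pn ns.N) (ns.N w) :=
  toChain ns _ ((hloc _).1 (n_idem ns w))

private lemma Pn_nbar (ns : Normalisation T) (hloc : LocallyNormal ns.N) (s t : T) :
    Pn ns.N (nbar ns.N s t).1 (nbar ns.N s t).2 := by
  have := chain_N ns hloc [s, t]
  rw [nbar_spec ns s t] at this
  exact List.isChain_pair.1 this

private lemma nbar_fix (ns : Normalisation T) (s t : T) (hst : Pn ns.N s t) :
    nbar ns.N s t = (s, t) := by
  unfold nbar
  rw [show ns.N [s, t] = [s, t] from hst]
  rfl

private lemma apA1 (f : T → T → T × T) (a b : T) (l : List T) :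
    applyAt f 1 (a :: b :: l) = (f a b).1 :: (f a b).2 :: l := rfl

private lemma apA2 (f : T → T → T × T) (a b c : T) (l : List T) :
    applyAt f 2 (a :: b :: c :: l) = a :: (f b c).1 :: (f b c).2 :: l := rfl

/-- The domino rule, derived from right-class 3. -/
private lemma domino (ns : Normalisation T) (hloc : LocallyNormal ns.N)
    (h3 : RightClass ns.N 3) (t0 s1 s2 : T) (h12 : Pn ns.N s1 s2) :
    Pn ns.N (nbar ns.N t0 s1).1 (nbar ns.N (nbar ns.N t0 s1).2 s2).1 := by
  have h3' := h3 [t0, s1, s2] rfl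
  have ha : altFrom 2 3 = [2, 1, 2] := rfl
  rw [ha] at h3'
  have e0 : applyAt (nbar ns.N) 2 [t0, s1, s2] = [t0, s1, s2] := by
    rw [apA2, nbar_fix ns s1 s2 h12]
  have comp : applySeq (nbar ns.N) [2, 1, 2] [t0, s1, s2]
      = [(nbar ns.N t0 s1).1, (nbar ns.N (nbar ns.N t0 s1).2 s2).1,
         (nbar ns.N (nbar ns.N t0 s1).2 s2).2] := by
    show applyAt (nbar ns.N) 2 (applyAt (nbar ns.N) 1 (applyAt (nbar ns.N) 2 [t0, s1, s2])) = _
    rw [e0, apA1, apA2]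
  rw [comp] at h3'
  have hc := chain_N ns hloc [t0, s1, s2]
  rw [h3'] at hc
  exact (List.isChain_cons_cons.1 hc).1

/-- Key lemma: `N (a·u)` for a normal word `u` is computed by one pass of `Dp`,
and the result is normal. -/
private lemma passL (ns : Normalisation T) (hloc : LocallyNormal ns.N)
    (h3 : RightClass ns.N 3) :
    ∀ (u : List T) (a : T), List.Chain' (Pn ns.N) u →
      ns.N (a :: u) = (Dp (nbar ns.N) a u).1 ++ [(Dp (nbar ns.N) a u).2] ∧
      List.Chain' (Pn ns.N) ((Dp (nbar ns.N) a u).1 ++ [(Dp (nbar ns.N) a u).2]) := by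
  intro u
  induction u with
  | nil =>
    intro a _
    refine ⟨by simpa [Dp] using ns.single a, by show List.Chain' _ [a]; exact List.isChain_singleton a⟩
  | cons s u ih =>
    intro a hch
    have hchu : List.Chain' (Pn ns.N) u := hch.tail
    obtain ⟨ih1, ih2⟩ := ih (nbar ns.N a s).2 hchu
    have hstep : ns.N (a :: s :: u) = ns.N ((nbar ns.N a s).1 :: (nbar ns.N a s).2 :: u) := by
      have h := ns.mid [] u [a, s]
      rw [nbar_spec ns a s] at h
      simpa using h.symm
    have hstep2 : ns.N ((nbar ns.N a s).1 :: (nbar ns.N a s).2 :: u)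
        = ns.N ((nbar ns.N a s).1 :: ((Dp (nbar ns.N) (nbar ns.N a s).2 u).1 ++ [(Dp (nbar ns.N) (nbar ns.N a s).2 u).2])) := by
      have h := ns.mid [(nbar ns.N a s).1] [] ((nbar ns.N a s).2 :: u)
      rw [ih1] at h
      simpa using h.symm
    have hjun : ∀ b ∈ ((Dp (nbar ns.N) (nbar ns.N a s).2 u).1 ++ [(Dp (nbar ns.N) (nbar ns.N a s).2 u).2]).head?,
        Pn ns.N (nbar ns.N a s).1 b := by
      intro b hb
      cases u with
      | nil =>
        simp [Dp] at hb
        rw [← hb]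
        exact Pn_nbar ns hloc a s
      | cons s2 u' =>
        have hb' : b = (nbar ns.N (nbar ns.N a s).2 s2).1 := by
          simp [Dp] at hb; exact hb.symm
        rw [hb']
        exact domino ns hloc h3 a s s2 (List.isChain_cons_cons.1 hch).1
    have hchX : List.Chain' (Pn ns.N)
        ((nbar ns.N a s).1 :: ((Dp (nbar ns.N) (nbar ns.N a s).2 u).1 ++ [(Dp (nbar ns.N) (nbar ns.N a s).2 u).2])) :=
      List.isChain_cons.2 ⟨hjun, ih2⟩
    constructor
    · rw [hstep, hstep2, n_fix ns hloc _ hchX]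
      simp [Dp]
    · simpa [Dp] using hchX

private lemma aF1 (ns : Normalisation T) (k : ℕ) (w : List T) :
    applyFactorAt ns.N k 1 w = ns.N (w.take k) ++ w.drop k := by
  show w.take 0 ++ ns.N ((w.drop 0).take k) ++ w.drop (0 + k) = _
  simp

private lemma aF2 (ns : Normalisation T) (k : ℕ) (w : List T) :
    applyFactorAt ns.N k 2 w = w.take 1 ++ ns.N ((w.drop 1).take k) ++ w.drop (1 + k) := rfl

/-- Main lemma: for a normal word `z` of length `≥ 2`, applying `N` to the
length-`|z|` factor at position 1 and then at position 2 of `a·z` yields `N (a·z)`. -/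
private lemma passM (ns : Normalisation T) (hloc : LocallyNormal ns.N)
    (h3 : RightClass ns.N 3) (z : List T) (a : T)
    (hchz : List.Chain' (Pn ns.N) z) (hlen2 : 2 ≤ z.length) :
    applyFactorAt ns.N z.length 2 (applyFactorAt ns.N z.length 1 (a :: z)) = ns.N (a :: z) := by
  obtain ⟨z1, l, rfl⟩ : ∃ z1 l, z = z1 ++ [l] := by
    rcases z.eq_nil_or_concat with h | ⟨L, b, h⟩
    · subst h; simp at hlen2
    · exact ⟨L, b, by simpa using h⟩
  obtain ⟨z2, s, rfl⟩ : ∃ z2 s, z1 = z2 ++ [s] := by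
    rcases z1.eq_nil_or_concat with h | ⟨L, b, h⟩
    · subst h; simp at hlen2
    · exact ⟨L, b, by simpa using h⟩
  have hD := Dp_snoc (nbar ns.N) z2 a s
  have hchz1 : List.Chain' (Pn ns.N) (z2 ++ [s]) := hchz.prefix ⟨[l], rfl⟩
  obtain ⟨hL1, hL2⟩ := passL ns hloc h3 (z2 ++ [s]) a hchz1
  have hsl : Pn ns.N s l := by
    have h2 : List.Chain' (Pn ns.N) [s, l] := hchz.infix ⟨z2, [], by simp⟩
    exact List.isChain_pair.1 h2
  have hdom := domino ns hloc h3 (Dp (nbar ns.N) a z2).2 s l hsl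
  have hnbtl := nbar_spec ns (nbar ns.N (Dp (nbar ns.N) a z2).2 s).2 l
  have hylen := Dp_len (nbar ns.N) z2 a
  set y := (Dp (nbar ns.N) a z2).1 with hye
  set c := (Dp (nbar ns.N) a z2).2 with hce
  set d := (nbar ns.N c s).1 with hde
  set t := (nbar ns.N c s).2 with hte
  set l' := (nbar ns.N t l).1 with hl'e
  set t' := (nbar ns.N t l).2 with ht'e
  simp only [hD] at hL1 hL2
  -- hL1 : ns.N (a :: (z2 ++ [s])) = (y ++ [d]) ++ [t]
  -- hdom : Pn ns.N d l'
  have hchyd : List.Chain' (Pn ns.N) (y ++ [d]) := hL2.prefix ⟨[t], rfl⟩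
  have hchX : List.Chain' (Pn ns.N) ((y ++ [d]) ++ [l', t']) := by
    refine List.isChain_append.2 ⟨hchyd, List.isChain_pair.2 (Pn_nbar ns hloc t l), ?_⟩
    intro x hx b hb
    rw [List.getLast?_concat] at hx
    simp at hx hb
    rw [← hx, ← hb]
    exact hdom
  have hNX : ns.N (a :: (z2 ++ [s] ++ [l])) = (y ++ [d]) ++ [l', t'] := by
    have e1 : ns.N (ns.N (a :: (z2 ++ [s])) ++ [l]) = ns.N ((a :: (z2 ++ [s])) ++ [l]) := by
      have h := ns.mid [] [l] (a :: (z2 ++ [s])); simpa using h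
    have e2 : ns.N ((y ++ [d]) ++ [l', t']) = ns.N ((y ++ [d]) ++ [t, l]) := by
      have h := ns.mid (y ++ [d]) [] [t, l]
      rw [hnbtl] at h
      simpa using h
    calc ns.N (a :: (z2 ++ [s] ++ [l]))
        = ns.N ((a :: (z2 ++ [s])) ++ [l]) := rfl
      _ = ns.N (ns.N (a :: (z2 ++ [s])) ++ [l]) := e1.symm
      _ = ns.N ((y ++ [d]) ++ [t] ++ [l]) := by rw [hL1]
      _ = ns.N ((y ++ [d]) ++ [t, l]) := by simp
      _ = ns.N ((y ++ [d]) ++ [l', t']) := e2.symm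
      _ = (y ++ [d]) ++ [l', t'] := n_fix ns hloc _ hchX
  have hkz : (z2 ++ [s] ++ [l]).length = z2.length + 2 := by simp
  rw [hkz]
  have hA1 : applyFactorAt ns.N (z2.length + 2) 1 (a :: (z2 ++ [s] ++ [l]))
      = (y ++ [d]) ++ [t, l] := by
    rw [aF1]
    have htk : (a :: (z2 ++ [s] ++ [l])).take (z2.length + 2) = a :: (z2 ++ [s]) := by
      show ((a :: (z2 ++ [s])) ++ [l]).take (z2.length + 2) = _
      exact List.take_left' (by simp)
    have hdk : (a :: (z2 ++ [s] ++ [l])).drop (z2.length + 2) = [l] := by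
      show ((a :: (z2 ++ [s])) ++ [l]).drop (z2.length + 2) = _
      exact List.drop_left' (by simp)
    rw [htk, hdk, hL1]
    simp
  have hA2 : applyFactorAt ns.N (z2.length + 2) 2 ((y ++ [d]) ++ [t, l])
      = (y ++ [d]) ++ [l', t'] := by
    rw [aF2]
    have h1 : ((y ++ [d]) ++ [t, l]).take 1 = (y ++ [d]).take 1 :=
      List.take_append_of_le_length (by simp)
    have h2 : ((y ++ [d]) ++ [t, l]).drop 1 = (y ++ [d]).drop 1 ++ [t, l] :=
      List.drop_append_of_le_length (by simp)
    have h3t : ((y ++ [d]).drop 1 ++ [t, l]).take (z2.length + 2)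
        = (y ++ [d]).drop 1 ++ [t, l] :=
      List.take_of_length_le (by simp [hylen])
    have h4 : ((y ++ [d]) ++ [t, l]).drop (1 + (z2.length + 2)) = [] :=
      List.drop_eq_nil_of_le (by simp [hylen]; omega)
    have h5 : ns.N ((y ++ [d]).drop 1 ++ [t, l]) = (y ++ [d]).drop 1 ++ [l', t'] := by
      have hcht : List.Chain' (Pn ns.N) ((y ++ [d]).drop 1 ++ [l', t']) := by
        have he : (y ++ [d]).drop 1 ++ [l', t'] = ((y ++ [d]) ++ [l', t']).drop 1 :=
          (List.drop_append_of_le_length (by simp)).symm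
        rw [he, List.drop_one]
        exact hchX.tail
      have h := ns.mid ((y ++ [d]).drop 1) [] [t, l]
      rw [hnbtl] at h
      calc ns.N ((y ++ [d]).drop 1 ++ [t, l])
          = ns.N ((y ++ [d]).drop 1 ++ [l', t']) := by simpa using h.symm
        _ = (y ++ [d]).drop 1 ++ [l', t'] := n_fix ns hloc _ hcht
    rw [h2, h1, h3t, h4, h5]
    rw [← List.append_assoc, List.take_append_drop]
    simp
  rw [hA1, hA2, hNX]


end QN



open QN
/-- A quadratic normalisation of class `(4, 3)` is of `p`-class `(4, 3)`
for every `p ≥ 3`: on length-`p` words, `N = N^[p−1]_{α_4}` and `N = N^[p−1]_{ᾱ_3}`. -/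
theorem statement12 {S : Type*} (ns : Normalisation S) (hq : Quadratic ns.N)
    (h4 : LeftClass ns.N 4) (h3 : RightClass ns.N 3) :
    ∀ p : ℕ, 3 ≤ p → ∀ w : List S, w.length = p →
      ns.N w = applyFactorSeq ns.N (p - 1) (altFrom 1 4) w ∧
      ns.N w = applyFactorSeq ns.N (p - 1) (altFrom 2 3) w := by
  obtain ⟨hloc, -⟩ := hq
  intro p hp w hw
  have hk2 : 2 ≤ p - 1 := by omega
  constructor
  · -- left: `N = N^[p-1]_{α₄}`
    obtain ⟨u1, b, rfl⟩ : ∃ u1 b, w = u1 ++ [b] := by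
      rcases w.eq_nil_or_concat with h | ⟨L, b, h⟩
      · subst h; simp at hw; omega
      · exact ⟨L, b, by simpa using h⟩
    have hu1 : u1.length = p - 1 := by
      simp at hw; omega
    have hfold : applyFactorSeq ns.N (p - 1) (altFrom 1 4) (u1 ++ [b]) =
        applyFactorAt ns.N (p - 1) 2 (applyFactorAt ns.N (p - 1) 1
          (applyFactorAt ns.N (p - 1) 2 (applyFactorAt ns.N (p - 1) 1 (u1 ++ [b])))) := rfl
    rw [hfold]
    have hA1 : applyFactorAt ns.N (p - 1) 1 (u1 ++ [b]) = ns.N u1 ++ [b] := by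
      rw [QN.aF1, List.take_left' hu1, List.drop_left' hu1]
    rw [hA1]
    rcases hNu : ns.N u1 with _ | ⟨s, v⟩
    · exfalso
      have hl := ns.length_eq u1
      rw [hNu] at hl; simp at hl; omega
    have hvlen : v.length + 1 = p - 1 := by
      have hl := ns.length_eq u1
      rw [hNu] at hl; simp at hl; omega
    have hA2 : applyFactorAt ns.N (p - 1) 2 ((s :: v) ++ [b]) = s :: ns.N (v ++ [b]) := by
      rw [QN.aF2]
      have h1 : ((s :: v) ++ [b]).take 1 = [s] := rfl
      have h2 : ((s :: v) ++ [b]).drop 1 = v ++ [b] := rfl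
      have h3t : (v ++ [b]).take (p - 1) = v ++ [b] :=
        List.take_of_length_le (by simp; omega)
      have h4 : ((s :: v) ++ [b]).drop (1 + (p - 1)) = [] :=
        List.drop_eq_nil_of_le (by simp; omega)
      rw [h1, h2, h3t, h4]
      simp
    rw [hA2]
    have hzlen : (ns.N (v ++ [b])).length = p - 1 := by
      rw [ns.length_eq]; simp; omega
    have hM := QN.passM ns hloc h3 (ns.N (v ++ [b])) s (QN.chain_N ns hloc _)
      (by rw [hzlen]; exact hk2)
    rw [hzlen] at hM
    rw [hM]
    have e1 : ns.N (s :: ns.N (v ++ [b])) = ns.N (s :: (v ++ [b])) := by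
      have h := ns.mid [s] [] (v ++ [b]); simpa using h
    have e2 : ns.N (ns.N u1 ++ [b]) = ns.N (u1 ++ [b]) := by
      have h := ns.mid [] [b] u1; simpa using h
    rw [e1, show s :: (v ++ [b]) = (s :: v) ++ [b] from rfl, ← hNu, e2]
  · -- right: `N = N^[p-1]_{ᾱ₃}`
    rcases w with _ | ⟨a, u⟩
    · simp at hw; omega
    have hulen : u.length = p - 1 := by simp at hw; omega
    have hfold : applyFactorSeq ns.N (p - 1) (altFrom 2 3) (a :: u) =
        applyFactorAt ns.N (p - 1) 2 (applyFactorAt ns.N (p - 1) 1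
          (applyFactorAt ns.N (p - 1) 2 (a :: u))) := rfl
    rw [hfold]
    have hA2 : applyFactorAt ns.N (p - 1) 2 (a :: u) = a :: ns.N u := by
      rw [QN.aF2]
      have h1 : (a :: u).take 1 = [a] := rfl
      have h2 : (a :: u).drop 1 = u := rfl
      have h3t : u.take (p - 1) = u := List.take_of_length_le (by omega)
      have h4 : (a :: u).drop (1 + (p - 1)) = [] :=
        List.drop_eq_nil_of_le (by simp; omega)
      rw [h1, h2, h3t, h4]
      simp
    rw [hA2]
    have hzlen : (ns.N u).length = p - 1 := by rw [ns.length_eq, hulen]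
    have hM := QN.passM ns hloc h3 (ns.N u) a (QN.chain_N ns hloc _)
      (by rw [hzlen]; exact hk2)
    rw [hzlen] at hM
    rw [hM]
    have h := ns.mid [a] [] u
    have : ns.N (a :: ns.N u) = ns.N (a :: u) := by simpa using h
    exact this.symm
end
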